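/- Let F be a finite field with q elements, M ∈ GL(n, q) of the block form diag(M₁₁, R) where R is an r×r companion matrix (r ≥ 2) with last column entries determined by coefficients a₀,…,a_{r−1}, and N₁ = diag(I_{n−2}, diag(u, v)) with u ≠ v. For y ∈ F let E(1,y) = diag(I_{n−2}, [[1, y],[0, 1]]). Then Trace(E(1,y)⁻¹ M E(1,y) · N₁) = y·(v − u) + Trace(M N₁), and in particular as y ranges over F this trace takes all q values of F. -/

import Mathlib

open Matrix in
lemma trace_stdBasisMatrix_mul' {n : ℕ} {F : Type*} [Field F] [DecidableEq (Fin n)]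
    (i j : Fin n) (c : F) (M : Matrix (Fin n) (Fin n) F) :
    Matrix.trace (Matrix.single i j c * M) = c * M j i := by
  rw [Matrix.trace]
  rw [Finset.sum_eq_single i]
  · simp
  · intro b _ hb; simp [Matrix.diag, hb]
  · simp

theorem stmt_17 (F : Type*) [Field F] [Fintype F] [DecidableEq F]
    (n r : ℕ) (hn : 2 ≤ n) (hr : 2 ≤ r) (hrn : r ≤ n)
    (a : ℕ → F) (u v : F) (huv : u ≠ v)
    (M : Matrix (Fin n) (Fin n) F) (hMu : IsUnit M)
    -- M is block diagonal, with the companion matrix of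
    -- xʳ + a_{r-1}x^{r-1} + ⋯ + a₀ occupying the last r rows and columns:
    (hM : ∀ i j : Fin n, (n - r ≤ (i : ℕ) ∨ n - r ≤ (j : ℕ)) →
      M i j =
        if n - r ≤ (i : ℕ) ∧ n - r ≤ (j : ℕ) then
          (if (j : ℕ) = n - 1 then -(a ((i : ℕ) - (n - r)))
           else if (i : ℕ) = (j : ℕ) + 1 then 1 else 0)
        else 0)
    (N₁ : Matrix (Fin n) (Fin n) F)
    (hN₁ : N₁ = fun i j : Fin n =>
      if i = j then
        (if (i : ℕ) = n - 2 then u else if (i : ℕ) = n - 1 then v else 1)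
      else 0)
    (E : F → Matrix (Fin n) (Fin n) F)
    (hE : ∀ y : F, E y = fun i j : Fin n =>
      if (i : ℕ) = n - 2 ∧ (j : ℕ) = n - 1 then y
      else if i = j then 1 else 0) :
    (∀ y : F, Matrix.trace ((E y)⁻¹ * M * E y * N₁) =
        y * (v - u) + Matrix.trace (M * N₁)) ∧
    (∀ t : F, ∃ y : F, Matrix.trace ((E y)⁻¹ * M * E y * N₁) = t) := by
  have hn2 : n - 2 < n := by omega
  have hn1 : n - 1 < n := by omega
  set i₀ : Fin n := ⟨n - 2, hn2⟩ with hi₀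
  set j₀ : Fin n := ⟨n - 1, hn1⟩ with hj₀
  have hvi : (i₀ : ℕ) = n - 2 := rfl
  have hvj : (j₀ : ℕ) = n - 1 := rfl
  have hij : i₀ ≠ j₀ := by
    simp only [hi₀, hj₀, Ne, Fin.mk.injEq]; omega
  -- E y = 1 + stdBasisMatrix i₀ j₀ y
  have hEeq : ∀ y : F, E y = 1 + Matrix.single i₀ j₀ y := by
    intro y
    rw [hE]
    ext i j
    by_cases h1 : (i : ℕ) = n - 2 ∧ (j : ℕ) = n - 1
    · have hii : i = i₀ := Fin.ext h1.1
      have hjj : j = j₀ := Fin.ext h1.2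
      subst hii; subst hjj
      simp [h1, Matrix.one_apply, hij, Matrix.single]
    · have h2 : ¬ (i₀ = i ∧ j₀ = j) := by
        rintro ⟨rfl, rfl⟩; exact h1 ⟨rfl, rfl⟩
      simp only [Matrix.add_apply, Matrix.single, Matrix.of_apply,
        Matrix.one_apply]
      rw [if_neg h1, if_neg h2, add_zero]
  -- inverse
  have hinv : ∀ y : F, (E y)⁻¹ = E (-y) := by
    intro y
    apply Matrix.inv_eq_right_inv
    rw [hEeq, hEeq]
    have h0 : Matrix.single i₀ j₀ y * Matrix.single i₀ j₀ (-y) = 0 :=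
      Matrix.single_mul_single_of_ne _ _ _ _ hij.symm _
    rw [add_mul, mul_add, mul_add, h0, one_mul, one_mul, mul_one]
    rw [add_zero, add_assoc, ← Matrix.single_add, neg_add_cancel]
    simp
  -- key entries
  have hMji : M j₀ i₀ = 1 := by
    rw [hM j₀ i₀ (by left; rw [hvj]; omega)]
    rw [if_pos (by rw [hvi, hvj]; omega)]
    rw [if_neg (by rw [hvi]; omega), if_pos (by rw [hvi, hvj]; omega)]
  have hN₁d : ∀ k : Fin n, N₁ k i₀ = if k = i₀ then u else 0 := by
    intro k
    rw [hN₁]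
    by_cases hk : k = i₀
    · subst hk; simp [hvi]
    · simp [hk]
  have hN₁jj : N₁ j₀ j₀ = v := by
    rw [hN₁]
    show (if j₀ = j₀ then _ else _) = v
    rw [if_pos rfl, if_neg (by rw [hvj]; omega), if_pos hvj]
  -- (M * N₁) j₀ i₀ = u
  have hMN : (M * N₁) j₀ i₀ = u := by
    rw [Matrix.mul_apply, Finset.sum_eq_single i₀]
    · rw [hMji, hN₁d, if_pos rfl, one_mul]
    · intro b _ hb; rw [hN₁d, if_neg hb, mul_zero]
    · simp
  -- (N₁ * M) j₀ i₀ = v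
  have hNM : (N₁ * M) j₀ i₀ = v := by
    rw [Matrix.mul_apply, Finset.sum_eq_single j₀]
    · rw [hMji, hN₁jj, mul_one]
    · intro b _ hb
      have : N₁ j₀ b = 0 := by rw [hN₁]; simp [hb.symm]
      rw [this, zero_mul]
    · simp
  have key : ∀ y : F, Matrix.trace ((E y)⁻¹ * M * E y * N₁) =
      y * (v - u) + Matrix.trace (M * N₁) := by
    intro y
    rw [hinv, hEeq, hEeq]
    set A := Matrix.single i₀ j₀ y with hA
    set B := Matrix.single i₀ j₀ (-y) with hB
    have expand : (1 + B) * M * (1 + A) * N₁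
        = M * N₁ + B * (M * N₁) + (M * (A * N₁)) + B * (M * (A * N₁)) := by
      noncomm_ring
    have hAcol : ∀ k : Fin n, A k i₀ = 0 := by
      intro k
      show (if i₀ = k ∧ j₀ = i₀ then y else 0) = 0
      rw [if_neg (fun h => hij h.2.symm)]
    have hANcol : ∀ k : Fin n, (A * N₁) k i₀ = 0 := by
      intro k
      rw [Matrix.mul_apply]
      apply Finset.sum_eq_zero
      intro m _
      rw [hN₁d]
      by_cases hm : m = i₀
      · subst hm; rw [if_pos rfl, hAcol, zero_mul]
      · rw [if_neg hm, mul_zero]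
    have hM4 : (M * (A * N₁)) j₀ i₀ = 0 := by
      rw [Matrix.mul_apply]
      apply Finset.sum_eq_zero
      intro m _
      rw [hANcol, mul_zero]
    rw [expand, Matrix.trace_add, Matrix.trace_add, Matrix.trace_add]
    rw [hB, trace_stdBasisMatrix_mul', trace_stdBasisMatrix_mul', hMN, hM4]
    rw [Matrix.trace_mul_comm M (A * N₁), Matrix.mul_assoc, hA,
      trace_stdBasisMatrix_mul', hNM]
    ring
  refine ⟨key, fun t => ?_⟩
  refine ⟨(t - Matrix.trace (M * N₁)) / (v - u), ?_⟩
  rw [key]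
  field_simp [sub_ne_zero.2 (Ne.symm huv)]
  ring
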